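/- For every s ∈ ℂ with Re s > 0, the integral ∫_0^∞ x^{s−1} · log(1 + e^{−x}) dx converges absolutely and equals Γ(s) · (1 − 2^{−s}) · ζ(s + 1), where Γ is the complex Gamma function and ζ is the Riemann zeta function (so the right-hand side is Γ(s)·η(s+1) with η the Dirichlet eta function). -/

import Mathlib

open MeasureTheory Complex Filter Set

lemma eta_summable {z : ℂ} (hz : 1 < z.re) :
    Summable (fun n : ℕ => (-1) ^ (n + 1) / (n : ℂ) ^ z) := by
  have hf : Summable (fun n : ℕ => 1 / (n : ℂ) ^ z) :=
    Complex.summable_one_div_nat_cpow.mpr hz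
  refine hf.norm.of_norm_bounded (fun n => le_of_eq ?_)
  simp [norm_div]

lemma eta_tsum {z : ℂ} (hz : 1 < z.re) :
    ∑' n : ℕ, (-1) ^ (n + 1) / (n : ℂ) ^ z = (1 - 2 ^ (1 - z)) * riemannZeta z := by
  have hz0 : z ≠ 0 := by
    intro h; rw [h] at hz; simp at hz; linarith
  have h2z : (2 : ℂ) ^ z ≠ 0 := by
    rw [Ne, cpow_eq_zero_iff]; simp
  have hf : Summable (fun n : ℕ => 1 / (n : ℂ) ^ z) :=
    Complex.summable_one_div_nat_cpow.mpr hz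
  have hG : Summable (fun n : ℕ => (-1) ^ (n + 1) / (n : ℂ) ^ z) := eta_summable hz
  set h : ℕ → ℂ := fun n => 1 / (n : ℂ) ^ z - (-1) ^ (n + 1) / (n : ℂ) ^ z with hh
  have hhs : Summable h := hf.sub hG
  have hodd : ∀ k : ℕ, h (2 * k + 1) = 0 := by
    intro k
    simp only [hh]
    rw [show 2 * k + 1 + 1 = 2 * (k + 1) by ring, Even.neg_one_pow ⟨k + 1, by ring⟩]
    ring
  have heven : ∀ k : ℕ, h (2 * k) = 2 ^ (1 - z) * (1 / (k : ℂ) ^ z) := by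
    intro k
    rcases Nat.eq_zero_or_pos k with rfl | hk
    · simp [hh, Complex.zero_cpow hz0]
    · have hk0 : ((k : ℕ) : ℂ) ^ z ≠ 0 := by
        simp [Ne, cpow_eq_zero_iff, Nat.cast_eq_zero, hk.ne']
      have h2k : ((2 * k : ℕ) : ℂ) ^ z = 2 ^ z * (k : ℂ) ^ z := by
        have e : ((2 * k : ℕ) : ℂ) = ((2 : ℝ) : ℂ) * ((k : ℝ) : ℂ) := by push_cast; ring
        rw [e, mul_cpow_ofReal_nonneg (by norm_num) (Nat.cast_nonneg k)]
        norm_num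
      have hm1 : ((-1 : ℂ)) ^ (2 * k + 1) = -1 := by
        rw [pow_succ, Even.neg_one_pow ⟨k, by ring⟩]; ring
      simp only [hh, hm1, h2k]
      rw [Complex.cpow_sub _ _ (two_ne_zero), Complex.cpow_one]
      field_simp
      ring
  have he : Summable fun k => h (2 * k) := by
    rw [funext heven]
    exact hf.mul_left _
  have ho : Summable fun k => h (2 * k + 1) := by
    rw [funext hodd]; exact summable_zero
  have key := tsum_even_add_odd he ho
  rw [funext hodd, funext heven] at key
  rw [tsum_zero, add_zero, tsum_mul_left] at key
  have hz' := (zeta_eq_tsum_one_div_nat_cpow hz).symm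
  rw [hz'] at key
  rw [hh, Summable.tsum_sub hf hG, hz'] at key
  linear_combination key

section aux
variable {s : ℂ}

-- continuity / measurability of the cpow factor
lemma cpow_contOn (s : ℂ) : ContinuousOn (fun x : ℝ => (x : ℂ) ^ (s - 1)) (Ioi 0) :=
  fun x hx => (Complex.continuousAt_ofReal_cpow_const x (s - 1) (Or.inr (ne_of_gt hx))).continuousWithinAt

-- the n-th term
noncomputable def gterm (s : ℂ) (n : ℕ) (x : ℝ) : ℂ :=
  ((-1 : ℂ) ^ n / ((n : ℂ) + 1)) * ((x : ℂ) ^ (s - 1) * Complex.exp (-(((n : ℝ) + 1) * x) : ℝ))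

lemma gterm_aesm (s : ℂ) (n : ℕ) :
    AEStronglyMeasurable (gterm s n) (volume.restrict (Ioi 0)) := by
  refine (ContinuousOn.aestronglyMeasurable ?_ measurableSet_Ioi)
  exact continuousOn_const.mul ((cpow_contOn s).mul
    (Complex.continuous_exp.comp (continuous_ofReal.comp
      (continuous_const.mul continuous_id').neg)).continuousOn)

lemma gterm_norm {n : ℕ} {x : ℝ} (hx : 0 < x) :
    ‖gterm s n x‖ = (1 / ((n : ℝ) + 1)) * (x ^ (s.re - 1) * Real.exp (-(((n : ℝ) + 1) * x))) := by
  have hn : (0:ℝ) < (n : ℝ) + 1 := by positivity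
  simp only [gterm, norm_mul, norm_div, norm_pow, norm_neg, norm_one, one_pow,
    Complex.norm_exp, Complex.norm_cpow_eq_rpow_re_of_pos hx,
    Complex.ofReal_re, Complex.sub_re, Complex.one_re]
  rw [show ‖(n : ℂ) + 1‖ = (n : ℝ) + 1 from by
      rw [show ((n : ℂ) + 1) = (((n : ℝ) + 1 : ℝ) : ℂ) from by push_cast; ring,
        Complex.norm_real, Real.norm_eq_abs, abs_of_pos hn]]

lemma gterm_integrable (hs : 0 < s.re) (n : ℕ) :
    IntegrableOn (gterm s n) (Ioi 0) := by
  refine Integrable.mono' ((Real.GammaIntegral_convergent hs).const_mul (1 / ((n:ℝ)+1)))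
    (gterm_aesm s n) ?_
  rw [ae_restrict_iff' measurableSet_Ioi]
  filter_upwards with x (hx : 0 < x)
  rw [gterm_norm hx]
  have hn : (0:ℝ) < (n : ℝ) + 1 := by positivity
  have h1 : Real.exp (-(((n : ℝ) + 1) * x)) ≤ Real.exp (-x) := by
    apply Real.exp_le_exp.mpr
    nlinarith [hx.le]
  have h2 : (0:ℝ) ≤ x ^ (s.re - 1) := Real.rpow_nonneg hx.le _
  calc (1 / ((n : ℝ) + 1)) * (x ^ (s.re - 1) * Real.exp (-(((n : ℝ) + 1) * x)))
      ≤ (1 / ((n : ℝ) + 1)) * (x ^ (s.re - 1) * Real.exp (-x)) := by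
        apply mul_le_mul_of_nonneg_left _ (by positivity)
        exact mul_le_mul_of_nonneg_left h1 h2
    _ = 1 / (↑n + 1) * (Real.exp (-x) * x ^ (s.re - 1)) := by ring

lemma gterm_norm_integral (hs : 0 < s.re) (n : ℕ) :
    ∫ x in Ioi (0:ℝ), ‖gterm s n x‖
      = (1 / ((n : ℝ) + 1)) * ((1 / ((n:ℝ)+1)) ^ s.re * Real.Gamma s.re) := by
  have hn : (0:ℝ) < (n : ℝ) + 1 := by positivity
  rw [setIntegral_congr_fun measurableSet_Ioi (fun x hx => gterm_norm hx),
    MeasureTheory.integral_const_mul, Real.integral_rpow_mul_exp_neg_mul_Ioi hs hn]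

lemma gterm_summable_norm (hs : 0 < s.re) :
    Summable (fun n : ℕ => ∫ x in Ioi (0:ℝ), ‖gterm s n x‖) := by
  have h : Summable (fun n : ℕ => Real.Gamma s.re * (1 / ((n:ℝ)+1) ^ (s.re + 1))) := by
    apply Summable.mul_left
    have := (Real.summable_one_div_nat_rpow (p := s.re + 1)).mpr (by linarith)
    exact_mod_cast (summable_nat_add_iff 1).mpr this
  refine h.congr (fun n => ?_)
  rw [gterm_norm_integral hs]
  have hn : (0:ℝ) < (n : ℝ) + 1 := by positivity
  rw [Real.rpow_add hn, Real.rpow_one, Real.div_rpow zero_le_one hn.le, Real.one_rpow]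
  have hp : (0:ℝ) < ((n:ℝ) + 1) ^ s.re := Real.rpow_pos_of_pos hn _
  rw [div_eq_mul_inv, div_eq_mul_inv, div_eq_mul_inv, mul_inv]
  ring

lemma gterm_hasSum {x : ℝ} (hx : 0 < x) :
    HasSum (fun n => gterm s n x)
      ((x : ℂ) ^ (s - 1) * (Real.log (1 + Real.exp (-x)) : ℂ)) := by
  have he : |(-Real.exp (-x))| < 1 := by
    rw [abs_neg, abs_of_pos (Real.exp_pos _)]
    exact Real.exp_lt_one_iff.mpr (by linarith)
  have h0 := Real.hasSum_pow_div_log_of_abs_lt_one he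
  rw [sub_neg_eq_add] at h0
  have h1 := h0.neg
  rw [neg_neg] at h1
  -- h1 : HasSum (fun n => -((-exp(-x))^(n+1)/(n+1))) (log (1 + exp (-x)))
  have h2 : ∀ n : ℕ, -((-Real.exp (-x)) ^ (n + 1) / ((n:ℝ) + 1))
      = (-1:ℝ)^n * Real.exp (-(((n:ℝ)+1) * x)) / ((n:ℝ)+1) := by
    intro n
    rw [neg_pow, show Real.exp (-x) ^ (n+1) = Real.exp (((n:ℕ)+1 : ℕ) * (-x)) by
        rw [Real.exp_nat_mul]]
    push_cast
    rw [show ((n:ℝ)+1) * (-x) = -(((n:ℝ)+1) * x) by ring]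
    rw [pow_succ]
    ring
  rw [funext h2] at h1
  have h3 := (Complex.hasSum_ofReal.mpr h1).mul_left ((x : ℂ) ^ (s - 1))
  refine h3.congr_fun (fun n => ?_)
  simp only [gterm, Complex.ofReal_div, Complex.ofReal_mul, Complex.ofReal_pow,
    Complex.ofReal_neg, Complex.ofReal_one, Complex.ofReal_exp]
  push_cast
  ring

lemma gterm_integral (hs : 0 < s.re) (n : ℕ) :
    ∫ x in Ioi (0:ℝ), gterm s n x
      = Complex.Gamma s * ((-1 : ℂ) ^ (n + 1 + 1) / (((n:ℕ) + 1 : ℕ) : ℂ) ^ (s + 1)) := by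
  have hn : (0:ℝ) < (n : ℝ) + 1 := by positivity
  have := Complex.integral_cpow_mul_exp_neg_mul_Ioi hs hn
  rw [show (fun x : ℝ => gterm s n x) = fun x : ℝ =>
      ((-1 : ℂ) ^ n / ((n : ℂ) + 1)) * ((x : ℂ) ^ (s - 1) * Complex.exp (-(((n : ℝ) + 1) * x) : ℝ))
    from rfl, MeasureTheory.integral_const_mul]
  simp only [Complex.ofReal_neg, Complex.ofReal_mul]
  rw [this]
  have hb0 : (((n:ℝ) + 1 : ℝ) : ℂ) ≠ 0 := Complex.ofReal_ne_zero.mpr hn.ne'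
  have harg : (((n:ℝ) + 1 : ℝ) : ℂ).arg ≠ Real.pi := by
    rw [Complex.arg_ofReal_of_nonneg hn.le]
    exact Real.pi_ne_zero.symm
  have hcs : (((n:ℝ) + 1 : ℝ) : ℂ) ^ s ≠ 0 := by
    rw [Ne, cpow_eq_zero_iff]; tauto
  rw [show ((1:ℂ) / (((n:ℝ)+1 : ℝ) : ℂ)) ^ s = ((((n:ℝ)+1 : ℝ) : ℂ) ^ s)⁻¹ by
    rw [one_div, Complex.inv_cpow _ _ harg]]
  rw [show ((((n:ℕ)+1 : ℕ)) : ℂ) ^ (s+1) = (((n:ℝ)+1 : ℝ) : ℂ) ^ s * (((n:ℝ)+1 : ℝ) : ℂ) by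
    rw [show ((((n:ℕ)+1 : ℕ)) : ℂ) = (((n:ℝ)+1 : ℝ) : ℂ) by push_cast; ring,
      Complex.cpow_add _ _ hb0, Complex.cpow_one]]
  rw [show ((n:ℂ) + 1) = (((n:ℝ)+1 : ℝ) : ℂ) by push_cast; ring]
  rw [show ((-1:ℂ)) ^ (n+1+1) = (-1:ℂ)^n by rw [pow_succ, pow_succ]; ring]
  field_simp

end aux

lemma Fcont (s : ℂ) : AEStronglyMeasurable
    (fun x : ℝ => (x : ℂ) ^ (s - 1) * (Real.log (1 + Real.exp (-x)) : ℂ))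
    (volume.restrict (Ioi 0)) := by
  refine ContinuousOn.aestronglyMeasurable ?_ measurableSet_Ioi
  refine (cpow_contOn s).mul (Continuous.continuousOn ?_)
  refine Complex.continuous_ofReal.comp ?_
  refine Continuous.log ?_ (fun x => by positivity)
  exact continuous_const.add (Real.continuous_exp.comp continuous_neg)

lemma Fnorm {s : ℂ} {x : ℝ} (hx : 0 < x) :
    ‖(x : ℂ) ^ (s - 1) * (Real.log (1 + Real.exp (-x)) : ℂ)‖
      ≤ Real.exp (-x) * x ^ (s.re - 1) := by
  have hl0 : 0 ≤ Real.log (1 + Real.exp (-x)) :=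
    Real.log_nonneg (by nlinarith [Real.exp_pos (-x)])
  have hl1 : Real.log (1 + Real.exp (-x)) ≤ Real.exp (-x) := by
    have := Real.log_le_sub_one_of_pos (x := 1 + Real.exp (-x)) (by positivity)
    linarith
  rw [norm_mul,
    Complex.norm_cpow_eq_rpow_re_of_pos hx, Complex.norm_real, Real.norm_eq_abs, _root_.abs_of_nonneg hl0,
    Complex.sub_re, Complex.one_re]
  calc x ^ (s.re - 1) * Real.log (1 + Real.exp (-x))
      ≤ x ^ (s.re - 1) * Real.exp (-x) :=
        mul_le_mul_of_nonneg_left hl1 (Real.rpow_nonneg hx.le _)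
    _ = Real.exp (-x) * x ^ (s.re - 1) := by ring

/-- For `Re s > 0`, `∫_0^∞ x^{s−1} log(1 + e^{−x}) dx` converges absolutely
and equals `Γ(s) (1 − 2^{−s}) ζ(s+1) = Γ(s) η(s+1)`. -/
theorem stmt6 (s : ℂ) (hs : 0 < s.re) :
    IntegrableOn (fun x : ℝ => (x : ℂ) ^ (s - 1) * (Real.log (1 + Real.exp (-x)) : ℂ))
      (Set.Ioi 0) ∧
    ∫ x in Set.Ioi (0 : ℝ), (x : ℂ) ^ (s - 1) * (Real.log (1 + Real.exp (-x)) : ℂ)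
      = Complex.Gamma s * (1 - (2 : ℂ) ^ (-s)) * riemannZeta (s + 1) := by
  constructor
  · refine Integrable.mono' (Real.GammaIntegral_convergent hs) (Fcont s) ?_
    rw [ae_restrict_iff' measurableSet_Ioi]
    filter_upwards with x hx
    exact Fnorm hx
  · have key := MeasureTheory.integral_tsum_of_summable_integral_norm
      (fun n => gterm_integrable hs n) (gterm_summable_norm hs)
    have hI : ∫ x in Ioi (0:ℝ), ∑' n, gterm s n x
        = ∫ x in Ioi (0:ℝ), (x : ℂ) ^ (s - 1) * (Real.log (1 + Real.exp (-x)) : ℂ) :=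
      setIntegral_congr_fun measurableSet_Ioi (fun x hx => (gterm_hasSum hx).tsum_eq)
    rw [← hI, ← key]
    -- now compute the sum of the integrals
    have hz1 : 1 < (s + 1).re := by simp [Complex.add_re]; linarith
    have hz0 : s + 1 ≠ 0 := by
      intro h
      have := congrArg Complex.re h
      simp [Complex.add_re] at this; linarith
    have hterm : ∀ n : ℕ, ∫ x in Ioi (0:ℝ), gterm s n x
        = Complex.Gamma s * ((-1 : ℂ) ^ ((n+1) + 1) / (((n:ℕ) + 1 : ℕ) : ℂ) ^ (s + 1)) :=
      fun n => gterm_integral hs n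
    rw [tsum_congr hterm, tsum_mul_left]
    have hG : Summable (fun m : ℕ => (-1 : ℂ) ^ (m + 1) / (m : ℂ) ^ (s + 1)) := eta_summable hz1
    have hshift := Summable.tsum_eq_zero_add hG
    have hG0 : ((-1 : ℂ) ^ (0 + 1) / ((0:ℕ) : ℂ) ^ (s + 1)) = 0 := by
      simp [Complex.zero_cpow hz0]
    rw [hG0, zero_add] at hshift
    push_cast at hshift ⊢
    rw [← hshift, eta_tsum hz1]
    rw [show (1 : ℂ) - (s + 1) = -s by ring]
    ring
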